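/- Consider the action of SL₃(k) × SL₂(k) on k³ ⊕ M_{3,2}(k) given by (g₁,g₂)·(v, A) = (g₁v, g₁ A g₂ᵀ). For every element (v, A), there exists (g₁,g₂) ∈ SL₃(k)×SL₂(k) such that, writing (w, B) = (g₁v, g₁ A g₂ᵀ), the first two entries of w are 0 and the (1,1)-entry of B is 0. -/

import Mathlib

open Matrix

lemma aux_vec_kill (k : Type*) [Field k] (v : Fin 3 → k) :
    ∃ g₁ : Matrix.SpecialLinearGroup (Fin 3) k,
      ((g₁ : Matrix (Fin 3) (Fin 3) k) *ᵥ v) 0 = 0 ∧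
      ((g₁ : Matrix (Fin 3) (Fin 3) k) *ᵥ v) 1 = 0 := by
  by_cases h2 : v 2 ≠ 0
  · refine ⟨⟨!![1, 0, -(v 0 / v 2); 0, 1, -(v 1 / v 2); 0, 0, 1], by
      simp [Matrix.det_fin_three]⟩, ?_, ?_⟩ <;>
    · show (!![1, 0, -(v 0 / v 2); 0, 1, -(v 1 / v 2); 0, 0, 1] *ᵥ v) _ = 0
      simp [Matrix.mulVec, dotProduct, Fin.sum_univ_three]
      try field_simp
      all_goals ring
  · push_neg at h2
    by_cases h1 : v 1 ≠ 0
    · refine ⟨⟨!![1, -(v 0 / v 1), 0; 0, 0, -1; 0, 1, 0], by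
        simp [Matrix.det_fin_three]⟩, ?_, ?_⟩ <;>
      · show (!![1, -(v 0 / v 1), 0; 0, 0, -1; 0, 1, 0] *ᵥ v) _ = 0
        simp [Matrix.mulVec, dotProduct, Fin.sum_univ_three, h2]
        try field_simp
        all_goals ring
    · push_neg at h1
      refine ⟨⟨!![0, 1, 0; 0, 0, 1; 1, 0, 0], by
        simp [Matrix.det_fin_three]⟩, ?_, ?_⟩ <;>
      · show (!![0, 1, 0; 0, 0, 1; 1, 0, 0] *ᵥ v) _ = 0
        simp [Matrix.mulVec, dotProduct, Fin.sum_univ_three, h1, h2]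

lemma aux_row_kill (k : Type*) [Field k] (a b : k) :
    ∃ g₂ : Matrix.SpecialLinearGroup (Fin 2) k,
      (g₂ : Matrix (Fin 2) (Fin 2) k) 0 0 * a + (g₂ : Matrix (Fin 2) (Fin 2) k) 0 1 * b = 0 := by
  by_cases hb : b ≠ 0
  · refine ⟨⟨!![b, -a; 0, 1/b], by simp [Matrix.det_fin_two]; field_simp⟩, ?_⟩
    show (!![b, -a; 0, 1/b] : Matrix (Fin 2) (Fin 2) k) 0 0 * a
        + (!![b, -a; 0, 1/b] : Matrix (Fin 2) (Fin 2) k) 0 1 * b = 0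
    simp; ring
  · push_neg at hb
    refine ⟨⟨!![0, -1; 1, 0], by simp [Matrix.det_fin_two]⟩, ?_⟩
    show (!![0, -1; 1, 0] : Matrix (Fin 2) (Fin 2) k) 0 0 * a
        + (!![0, -1; 1, 0] : Matrix (Fin 2) (Fin 2) k) 0 1 * b = 0
    simp [hb]

/-- For the action of `SL₃(k) × SL₂(k)` on `k³ ⊕ M_{3,2}(k)` given by
`(g₁,g₂)·(v, A) = (g₁v, g₁ A g₂ᵀ)`, every element can be moved so that the first two
entries of the vector and the `(1,1)`-entry of the matrix vanish. -/
theorem sl3_sl2_eliminate_3_32 (k : Type*) [Field k] (v : Fin 3 → k)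
    (A : Matrix (Fin 3) (Fin 2) k) :
    ∃ (g₁ : Matrix.SpecialLinearGroup (Fin 3) k) (g₂ : Matrix.SpecialLinearGroup (Fin 2) k),
      ((g₁ : Matrix (Fin 3) (Fin 3) k) *ᵥ v) 0 = 0 ∧
      ((g₁ : Matrix (Fin 3) (Fin 3) k) *ᵥ v) 1 = 0 ∧
      ((g₁ : Matrix (Fin 3) (Fin 3) k) * A * (g₂ : Matrix (Fin 2) (Fin 2) k)ᵀ) 0 0 = 0 := by
  obtain ⟨g₁, hv0, hv1⟩ := aux_vec_kill k v
  obtain ⟨g₂, hg₂⟩ := aux_row_kill k (((g₁ : Matrix (Fin 3) (Fin 3) k) * A) 0 0)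
      (((g₁ : Matrix (Fin 3) (Fin 3) k) * A) 0 1)
  refine ⟨g₁, g₂, hv0, hv1, ?_⟩
  rw [Matrix.mul_apply, Fin.sum_univ_two]
  simpa [Matrix.transpose_apply, mul_comm] using hg₂
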